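/- Let m and r be positive integers with m ≥ 2, and let Δ: [1, g(m,r)-1] → [1,r] be a coloring. If some color c satisfies |Δ^{-1}(c) ∩ [1, r(m-1)]| ≥ m, then Δ is not an L(r)-coloring, i.e., there exist monochromatic m-sets X ≺ Y in [1, g(m,r)-1] with 2(x_m - x_1) ≤ y_m - x_1. -/

import Mathlib

/-- `x` is a monochromatic m-set (indexed 1..m) inside `S` under coloring `Δ`. -/
def IsMonoMSet (m : ℕ) (Δ : ℕ → ℕ) (S : Finset ℕ) (x : ℕ → ℕ) : Prop :=
  (∀ i j, 1 ≤ i → i < j → j ≤ m → x i < x j) ∧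
  (∀ i, 1 ≤ i → i ≤ m → x i ∈ S) ∧
  (∀ i, 1 ≤ i → i ≤ m → Δ (x i) = Δ (x 1))

/-- There exist monochromatic m-sets X ≺ Y in `S` with 2(x_m - x_1) ≤ y_m - x_1. -/
def HasGoodPair (m : ℕ) (Δ : ℕ → ℕ) (S : Finset ℕ) : Prop :=
  ∃ x y : ℕ → ℕ, IsMonoMSet m Δ S x ∧ IsMonoMSet m Δ S y ∧
    x m < y 1 ∧ 2 * (x m - x 1) ≤ y m - x 1

/-- `g m r` : least N such that every r-coloring of [1,N] has a good pair. -/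
noncomputable def g (m r : ℕ) : ℕ :=
  sInf {N | ∀ Δ : ℕ → ℕ, (∀ z ∈ Finset.Icc 1 N, Δ z ∈ Finset.Icc 1 r) →
    HasGoodPair m Δ (Finset.Icc 1 N)}

/-- Extract a strictly increasing enumeration (indexed 1..m) from a finset of card ≥ m. -/
lemma extract_mono (m : ℕ) (hm : 1 ≤ m) (T : Finset ℕ) (hT : m ≤ T.card) :
    ∃ x : ℕ → ℕ, (∀ i j, 1 ≤ i → i < j → j ≤ m → x i < x j) ∧
      (∀ i, 1 ≤ i → i ≤ m → x i ∈ T) := by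
  refine ⟨fun i => T.orderEmbOfCardLe hT ⟨min (i - 1) (m - 1), by omega⟩, ?_, ?_⟩
  · intro i j hi hij hjm
    have hlt : (⟨min (i - 1) (m - 1), by omega⟩ : Fin m) <
        ⟨min (j - 1) (m - 1), by omega⟩ := by
      simp only [Fin.mk_lt_mk]
      omega
    exact (T.orderEmbOfCardLe hT).strictMono hlt
  · intro i _ _
    exact T.orderEmbOfCardLe_mem hT _

/-- From a large monochromatic fiber inside `s`, extract a mono m-set. -/
lemma exists_mset (m : ℕ) (hm : 1 ≤ m) (Δ : ℕ → ℕ) (d : ℕ) (s : Finset ℕ)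
    (h : m ≤ (s.filter (fun z => Δ z = d)).card) :
    ∃ x : ℕ → ℕ, (∀ i j, 1 ≤ i → i < j → j ≤ m → x i < x j) ∧
      (∀ i, 1 ≤ i → i ≤ m → x i ∈ s) ∧ (∀ i, 1 ≤ i → i ≤ m → Δ (x i) = d) := by
  obtain ⟨x, hmono, hmem⟩ := extract_mono m hm _ h
  refine ⟨x, hmono, fun i hi him => ?_, fun i hi him => ?_⟩
  · exact (Finset.mem_filter.mp (hmem i hi him)).1
  · exact (Finset.mem_filter.mp (hmem i hi him)).2

/-- Pigeonhole: a set of more than r·(m−1) elements colored in [1,r] has a fiber of size ≥ m. -/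
lemma exists_big_fiber (m r : ℕ) (Δ : ℕ → ℕ) (s : Finset ℕ)
    (hmap : ∀ z ∈ s, Δ z ∈ Finset.Icc 1 r)
    (hcard : r * (m - 1) < s.card) :
    ∃ d, m ≤ (s.filter (fun z => Δ z = d)).card := by
  have h := Finset.exists_lt_card_fiber_of_mul_lt_card_of_maps_to hmap
    (by rwa [Nat.card_Icc, Nat.add_sub_cancel])
  obtain ⟨d, _, hd⟩ := h
  exact ⟨d, by omega⟩

/-- 3r(m−1)+2 is in the defining set of `g`. -/
lemma mem_gset (m r : ℕ) (hm : 2 ≤ m) (hr : 1 ≤ r) :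
    (3 * (r * (m - 1)) + 2) ∈ {N | ∀ Δ : ℕ → ℕ,
      (∀ z ∈ Finset.Icc 1 N, Δ z ∈ Finset.Icc 1 r) →
      HasGoodPair m Δ (Finset.Icc 1 N)} := by
  intro Δ hΔ
  set R := r * (m - 1) with hR
  have hR1 : 1 ≤ R := by
    have : 1 ≤ m - 1 := by omega
    calc 1 ≤ 1 * 1 := by omega
    _ ≤ r * (m - 1) := Nat.mul_le_mul hr this
  -- first pigeonhole on [1, R+1]
  have hmap1 : ∀ z ∈ Finset.Icc 1 (R + 1), Δ z ∈ Finset.Icc 1 r := by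
    intro z hz
    simp only [Finset.mem_Icc] at hz ⊢
    exact Finset.mem_Icc.mp (hΔ z (Finset.mem_Icc.mpr (by omega)))
  obtain ⟨d₁, hd₁⟩ := exists_big_fiber m r Δ _ hmap1 (by rw [Nat.card_Icc]; omega)
  obtain ⟨x, hxmono, hxmem, hxcol⟩ := exists_mset m (by omega) Δ d₁ _ hd₁
  have hx1 : 1 ≤ x 1 ∧ x 1 ≤ R + 1 := by
    have := hxmem 1 le_rfl (by omega); simpa [Finset.mem_Icc] using this
  have hxm : 1 ≤ x m ∧ x m ≤ R + 1 := by
    have := hxmem m (by omega) le_rfl; simpa [Finset.mem_Icc] using this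
  have hx1m : x 1 < x m := hxmono 1 m le_rfl (by omega) le_rfl
  -- second pigeonhole on [2 x_m − x_1, 2 x_m − x_1 + R]
  set D := 2 * x m - x 1 with hD
  have hmap2 : ∀ z ∈ Finset.Icc D (D + R), Δ z ∈ Finset.Icc 1 r := by
    intro z hz
    simp only [Finset.mem_Icc] at hz
    exact hΔ z (Finset.mem_Icc.mpr (by omega))
  obtain ⟨d₂, hd₂⟩ := exists_big_fiber m r Δ _ hmap2 (by rw [Nat.card_Icc]; omega)
  obtain ⟨y, hymono, hymem, hycol⟩ := exists_mset m (by omega) Δ d₂ _ hd₂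
  have hy1 : D ≤ y 1 ∧ y 1 ≤ D + R := by
    have := hymem 1 le_rfl (by omega); simpa [Finset.mem_Icc] using this
  have hym : D ≤ y m ∧ y m ≤ D + R := by
    have := hymem m (by omega) le_rfl; simpa [Finset.mem_Icc] using this
  have hy1m : y 1 ≤ y m := le_of_lt (hymono 1 m le_rfl (by omega) le_rfl)
  refine ⟨x, y, ⟨hxmono, ?_, ?_⟩, ⟨hymono, ?_, ?_⟩, ?_, ?_⟩
  · intro i hi him
    have := hxmem i hi him
    simp only [Finset.mem_Icc] at this ⊢
    omega
  · intro i hi him; rw [hxcol i hi him, hxcol 1 le_rfl (by omega)]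
  · intro i hi him
    have := hymem i hi him
    simp only [Finset.mem_Icc] at this ⊢
    omega
  · intro i hi him; rw [hycol i hi him, hycol 1 le_rfl (by omega)]
  · omega
  · omega

theorem stmt15 (m r : ℕ) (hm : 2 ≤ m) (hr : 1 ≤ r) (Δ : ℕ → ℕ)
    (hΔ : ∀ z ∈ Finset.Icc 1 (g m r - 1), Δ z ∈ Finset.Icc 1 r)
    (c : ℕ)
    (hc : m ≤ ((Finset.Icc 1 (r * (m - 1))).filter (fun z => Δ z = c)).card) :
    HasGoodPair m Δ (Finset.Icc 1 (g m r - 1)) := by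
  by_contra hno
  set R := r * (m - 1) with hRdef
  set S : Set ℕ := {N | ∀ Δ : ℕ → ℕ,
      (∀ z ∈ Finset.Icc 1 N, Δ z ∈ Finset.Icc 1 r) →
      HasGoodPair m Δ (Finset.Icc 1 N)} with hSdef
  have hgdef : g m r = sInf S := rfl
  have hSne : S.Nonempty := ⟨3 * (r * (m - 1)) + 2, mem_gset m r hm hr⟩
  have hgS : g m r ∈ S := by rw [hgdef]; exact Nat.sInf_mem hSne
  -- g ≥ 1
  have hg1 : 1 ≤ g m r := by
    by_contra hg0
    have h0 : (0 : ℕ) ∈ S := by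
      have : g m r = 0 := by omega
      rwa [this] at hgS
    have := h0 (fun _ => 1) (by intro z hz; simp at hz)
    obtain ⟨x, y, ⟨_, hxS, _⟩, _, _, _⟩ := this
    have := hxS 1 le_rfl (by omega)
    simp at this
  set n := g m r - 1 with hn
  -- the count function
  set cnt : ℕ → ℕ → ℕ := fun d w => ((Finset.Icc 1 w).filter (fun z => Δ z = d)).card
    with hcnt
  have cnt_mono : ∀ d w w', w ≤ w' → cnt d w ≤ cnt d w' := by
    intro d w w' hw
    exact Finset.card_le_card (Finset.filter_subset_filter _
      (Finset.Icc_subset_Icc_right hw))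
  -- KEY: choose a color e such that any witness of m−1 elements of color e below w ≤ n
  -- forces R ≤ w
  have KEY : ∃ e ∈ Finset.Icc 1 r, ∀ w, w ≤ n → m - 1 ≤ cnt e w → R ≤ w := by
    by_cases hsmall : ∃ e ∈ Finset.Icc 1 r, cnt e n ≤ m - 2
    · obtain ⟨e, heI, hecnt⟩ := hsmall
      refine ⟨e, heI, fun w hwn hwcnt => absurd (le_trans hwcnt
        (le_trans (cnt_mono e w n hwn) hecnt)) (by omega)⟩
    · push_neg at hsmall
      have hall : ∀ d ∈ Finset.Icc 1 r, m - 1 ≤ cnt d n := by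
        intro d hd
        have := hsmall d hd
        omega
      set u : ℕ → ℕ := fun d => sInf {w | m - 1 ≤ cnt d w} with hu
      have hudn : ∀ d ∈ Finset.Icc 1 r, u d ≤ n := fun d hd => Nat.sInf_le (hall d hd)
      have hud : ∀ d ∈ Finset.Icc 1 r, m - 1 ≤ cnt d (u d) := fun d hd =>
        Nat.sInf_mem (⟨n, hall d hd⟩ : {w | m - 1 ≤ cnt d w}.Nonempty)
      obtain ⟨e, heI, hemax⟩ := Finset.exists_max_image (Finset.Icc 1 r) u
        ⟨1, Finset.mem_Icc.mpr ⟨le_rfl, hr⟩⟩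
      have huen : u e ≤ n := hudn e heI
      -- R ≤ u e
      have hRu : R ≤ u e := by
        have hcov : ∀ z ∈ Finset.Icc 1 (u e), Δ z ∈ Finset.Icc 1 r := by
          intro z hz
          simp only [Finset.mem_Icc] at hz
          exact hΔ z (Finset.mem_Icc.mpr ⟨hz.1, le_trans hz.2 huen⟩)
        have hsum := Finset.card_eq_sum_card_fiberwise hcov
        have hterm : ∀ d ∈ Finset.Icc 1 r, m - 1 ≤ cnt d (u e) := by
          intro d hd
          exact le_trans (hud d hd) (cnt_mono d (u d) (u e) (hemax d hd))
        have hlow := Finset.card_nsmul_le_sum (Finset.Icc 1 r)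
          (fun d => cnt d (u e)) (m - 1) hterm
        rw [Nat.card_Icc, Nat.add_sub_cancel, smul_eq_mul] at hlow
        have hcard : (Finset.Icc 1 (u e)).card = u e := by rw [Nat.card_Icc]; omega
        rw [hcard] at hsum
        calc R = r * (m - 1) := hRdef
        _ ≤ ∑ d ∈ Finset.Icc 1 r, cnt d (u e) := hlow
        _ = u e := hsum.symm
      refine ⟨e, heI, fun w hwn hwcnt => le_trans hRu (Nat.sInf_le hwcnt)⟩
  obtain ⟨e, heI, hkey⟩ := KEY
  -- the prepended coloring
  set Δp : ℕ → ℕ := fun z => if z = 1 then e else Δ (z - 1) with hΔp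
  have hΔpc : ∀ z ∈ Finset.Icc 1 (g m r), Δp z ∈ Finset.Icc 1 r := by
    intro z hz
    simp only [Finset.mem_Icc] at hz
    by_cases hz1 : z = 1
    · have : Δp z = e := by simp [hΔp, hz1]
      rw [this]; exact heI
    · simp only [hΔp, if_neg hz1]
      exact hΔ (z - 1) (Finset.mem_Icc.mpr (by omega))
  have hGP := hgS Δp hΔpc
  obtain ⟨x, y, ⟨hxmono, hxS, hxc⟩, ⟨hymono, hyS, hyc⟩, hxy, hcond⟩ := hGP
  -- basic facts
  have hxmem : ∀ i, 1 ≤ i → i ≤ m → 1 ≤ x i ∧ x i ≤ g m r := by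
    intro i hi him
    have := hxS i hi him; simpa [Finset.mem_Icc] using this
  have hymem : ∀ i, 1 ≤ i → i ≤ m → 1 ≤ y i ∧ y i ≤ g m r := by
    intro i hi him
    have := hyS i hi him; simpa [Finset.mem_Icc] using this
  have hx1le : ∀ i, 1 ≤ i → i ≤ m → x 1 ≤ x i := by
    intro i hi him
    rcases eq_or_lt_of_le hi with h | h
    · rw [← h]
    · exact le_of_lt (hxmono 1 i le_rfl h him)
  have hy1le : ∀ i, 1 ≤ i → i ≤ m → y 1 ≤ y i := by
    intro i hi him
    rcases eq_or_lt_of_le hi with h | h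
    · rw [← h]
    · exact le_of_lt (hymono 1 i le_rfl h him)
  have hx1m : x 1 < x m := hxmono 1 m le_rfl (by omega) le_rfl
  have hyi2 : ∀ i, 1 ≤ i → i ≤ m → x m < y i :=
    fun i hi him => lt_of_lt_of_le hxy (hy1le i hi him)
  by_cases h1 : x 1 = 1
  · -- X uses the new point 1; color e class has m−1 elements below x m − 1
    have hxgt : ∀ i, 2 ≤ i → i ≤ m → 2 ≤ x i := by
      intro i h2 him
      have := hxmono 1 i le_rfl (by omega) him
      omega
    have hxcole : ∀ i, 1 ≤ i → i ≤ m → Δp (x i) = e := by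
      intro i hi him
      rw [hxc i hi him, h1]
      simp [hΔp]
    -- image argument : m − 1 ≤ cnt e (x m − 1)
    have himg : m - 1 ≤ cnt e (x m - 1) := by
      have hcard2 : (Finset.Icc 2 m).card = m - 1 := by rw [Nat.card_Icc]; omega
      rw [← hcard2]
      apply Finset.card_le_card_of_injOn (fun i => x i - 1)
      · intro i hi
        simp only [Finset.mem_coe, Finset.mem_Icc] at hi
        have h2 := hxgt i hi.1 hi.2
        have hxile : x i ≤ x m := by
          rcases eq_or_lt_of_le hi.2 with h | h
          · rw [h]
          · exact le_of_lt (hxmono i m (by omega) h le_rfl)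
        simp only [Finset.mem_coe, Finset.mem_filter, Finset.mem_Icc]
        refine ⟨⟨by omega, by omega⟩, ?_⟩
        have := hxcole i (by omega) hi.2
        rw [hΔp] at this
        simp only [if_neg (by omega : ¬ x i = 1)] at this
        exact this
      · intro i hi j hj hij
        simp only [Finset.coe_Icc, Set.mem_Icc] at hi hj
        have hij' : x i - 1 = x j - 1 := hij
        by_contra hne
        rcases lt_trichotomy i j with h | h | h
        · have := hxmono i j (by omega) h hj.2
          have := hxgt i hi.1 hi.2
          omega
        · exact hne h
        · have := hxmono j i (by omega) h hi.2
          have := hxgt j hj.1 hj.2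
          omega
    have hxmg : x m ≤ g m r := (hxmem m (by omega) le_rfl).2
    have hRxm : R ≤ x m - 1 := hkey (x m - 1) (by omega) himg
    -- extract T from hc
    obtain ⟨t, htmono, htmem, htcol⟩ := exists_mset m (by omega) Δ c _ hc
    have htbd : ∀ i, 1 ≤ i → i ≤ m → 1 ≤ t i ∧ t i ≤ R := by
      intro i hi him
      have := htmem i hi him; simpa [Finset.mem_Icc] using this
    have ht1m : t 1 < t m := htmono 1 m le_rfl (by omega) le_rfl
    -- shifted Y
    have hyg : ∀ i, 1 ≤ i → i ≤ m → y i ≤ g m r := fun i hi him => (hymem i hi him).2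
    have hycolshift : ∀ i, 1 ≤ i → i ≤ m → Δ (y i - 1) = Δ (y 1 - 1) := by
      intro i hi him
      have h2i : 2 ≤ y i := by have := hyi2 i hi him; omega
      have h21 : 2 ≤ y 1 := by have := hyi2 1 le_rfl (by omega); omega
      have hci := hyc i hi him
      rw [hΔp] at hci
      simp only [if_neg (by omega : ¬ y i = 1), if_neg (by omega : ¬ y 1 = 1)] at hci
      exact hci
    -- good pair (t, y − 1) for Δ
    apply hno
    refine ⟨t, fun i => y i - 1, ⟨htmono, ?_, fun i hi him => by
      rw [htcol i hi him, htcol 1 le_rfl (by omega)]⟩, ⟨?_, ?_, ?_⟩, ?_, ?_⟩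
    · intro i hi him
      have := htbd i hi him
      simp only [Finset.mem_Icc]
      omega
    · intro i j hi hij hjm
      show y i - 1 < y j - 1
      have := hymono i j hi hij hjm
      have := hyi2 i hi (by omega)
      omega
    · intro i hi him
      show y i - 1 ∈ Finset.Icc 1 n
      have h2i : 2 ≤ y i := by have := hyi2 i hi him; omega
      have := hyg i hi him
      simp only [Finset.mem_Icc]
      omega
    · exact hycolshift
    · -- t m < y 1 − 1
      show t m < y 1 - 1
      have := (htbd m (by omega) le_rfl).2
      have := hyi2 1 le_rfl (by omega)
      omega
    · -- 2(t m − t 1) ≤ (y m − 1) − t 1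
      show 2 * (t m - t 1) ≤ (y m - 1) - t 1
      have htm : t m ≤ R := (htbd m (by omega) le_rfl).2
      have ht1 : 1 ≤ t 1 := (htbd 1 le_rfl (by omega)).1
      have hymg : x m < y m := hyi2 m (by omega) le_rfl
      -- from hcond with x 1 = 1 : 2(x m − 1) ≤ y m − 1
      rw [h1] at hcond
      omega
  · -- X avoids 1 : shift the whole pair down
    have hx12 : 2 ≤ x 1 := by
      have := (hxmem 1 le_rfl (by omega)).1
      omega
    have hxi2 : ∀ i, 1 ≤ i → i ≤ m → 2 ≤ x i := fun i hi him =>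
      le_trans hx12 (hx1le i hi him)
    have hyi3 : ∀ i, 1 ≤ i → i ≤ m → 2 ≤ y i := by
      intro i hi him
      have := hyi2 i hi him
      have := hxi2 m (by omega) le_rfl
      omega
    have hxcolshift : ∀ i, 1 ≤ i → i ≤ m → Δ (x i - 1) = Δ (x 1 - 1) := by
      intro i hi him
      have h2i := hxi2 i hi him
      have hci := hxc i hi him
      rw [hΔp] at hci
      simp only [if_neg (by omega : ¬ x i = 1),
        if_neg (by omega : ¬ x 1 = 1)] at hci
      exact hci
    have hycolshift : ∀ i, 1 ≤ i → i ≤ m → Δ (y i - 1) = Δ (y 1 - 1) := by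
      intro i hi him
      have h2i := hyi3 i hi him
      have h21 := hyi3 1 le_rfl (by omega)
      have hci := hyc i hi him
      rw [hΔp] at hci
      simp only [if_neg (by omega : ¬ y i = 1), if_neg (by omega : ¬ y 1 = 1)] at hci
      exact hci
    apply hno
    refine ⟨fun i => x i - 1, fun i => y i - 1, ⟨?_, ?_, hxcolshift⟩,
      ⟨?_, ?_, hycolshift⟩, ?_, ?_⟩
    · intro i j hi hij hjm
      show x i - 1 < x j - 1
      have := hxmono i j hi hij hjm
      have := hxi2 i hi (by omega)
      omega
    · intro i hi him
      show x i - 1 ∈ Finset.Icc 1 n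
      have h2 := hxi2 i hi him
      have := (hxmem i hi him).2
      simp only [Finset.mem_Icc]
      omega
    · intro i j hi hij hjm
      show y i - 1 < y j - 1
      have := hymono i j hi hij hjm
      have := hyi3 i hi (by omega)
      omega
    · intro i hi him
      show y i - 1 ∈ Finset.Icc 1 n
      have h2 := hyi3 i hi him
      have := (hymem i hi him).2
      simp only [Finset.mem_Icc]
      omega
    · show x m - 1 < y 1 - 1
      have := hxi2 m (by omega) le_rfl
      omega
    · show 2 * ((x m - 1) - (x 1 - 1)) ≤ (y m - 1) - (x 1 - 1)
      have hx1xm : x 1 ≤ x m := hx1le m (by omega) le_rfl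
      have hy1ym : y 1 ≤ y m := hy1le m (by omega) le_rfl
      omega
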